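/- Let E be a Banach space with a compact linear inclusion i : E₁ ↪ E of a Banach space E₁ that is a dense subspace of E. If A ⊆ E is a closed subspace contained in E₁ (with the E₁-topology finer), and the restriction A ∩ E₁ is closed in E₁, then A is finite-dimensional. In particular, a closed infinite-dimensional subspace of E cannot be contained in E₁. -/
import Mathlib

theorem stmt_17 {E₁ E : Type*} [NormedAddCommGroup E₁] [NormedSpace ℝ E₁] [CompleteSpace E₁]
    [NormedAddCommGroup E] [NormedSpace ℝ E] [CompleteSpace E]
    (i : E₁ →L[ℝ] E) (hinj : Function.Injective i) (hcpt : IsCompactOperator i)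
    (hdense : DenseRange i)
    (A : Submodule ℝ E) (hAclosed : IsClosed (A : Set E))
    (hAsub : (A : Set E) ⊆ Set.range i)
    (hA₁closed : IsClosed (i ⁻¹' (A : Set E))) :
    FiniteDimensional ℝ A := by
  -- the preimage submodule
  set A₁ : Submodule ℝ E₁ := A.comap (i : E₁ →ₗ[ℝ] E) with hA₁
  have hA₁c : IsClosed (A₁ : Set E₁) := hA₁closed
  haveI : CompleteSpace A₁ := hA₁c.completeSpace_coe
  haveI : CompleteSpace A := hAclosed.completeSpace_coe
  -- the restricted map j : A₁ →L[ℝ] A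
  have hmem : ∀ x : A₁, (i.comp A₁.subtypeL) x ∈ A := fun x => x.2
  let j : A₁ →L[ℝ] A := (i.comp A₁.subtypeL).codRestrict A hmem
  have hjcpt : IsCompactOperator j :=
    (hcpt.comp_clm A₁.subtypeL).codRestrict hmem hAclosed
  have hjinj : Function.Injective j := by
    intro x y hxy
    have : i x = i y := congrArg Subtype.val hxy
    exact Subtype.ext (hinj this)
  have hjsurj : Function.Surjective j := by
    intro a
    obtain ⟨x, hx⟩ := hAsub a.2
    refine ⟨⟨x, ?_⟩, ?_⟩
    · show i x ∈ A; rw [hx]; exact a.2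
    · exact Subtype.ext hx
  -- Banach isomorphism theorem
  let e : A₁ ≃L[ℝ] A := ContinuousLinearEquiv.ofBijective j
    (LinearMap.ker_eq_bot.mpr hjinj) (LinearMap.range_eq_top.mpr hjsurj)
  have hid : IsCompactOperator (fun a : A => a) := by
    have : IsCompactOperator (j ∘ (e.symm : A →L[ℝ] A₁)) :=
      hjcpt.comp_clm (e.symm : A →L[ℝ] A₁)
    have heq : (j ∘ (e.symm : A →L[ℝ] A₁)) = fun a : A => a := by
      funext a
      have : j (e.symm a) = e (e.symm a) := rfl
      simp [Function.comp, this]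
    rwa [heq] at this
  obtain ⟨K, hKc, hKn⟩ := hid
  have hKn' : K ∈ nhds (0 : A) := hKn
  obtain ⟨r, hr, hball⟩ := Metric.nhds_basis_closedBall.mem_iff.mp hKn'
  have hcball : IsCompact (Metric.closedBall (0 : A) r) :=
    hKc.of_isClosed_subset Metric.isClosed_closedBall hball
  exact FiniteDimensional.of_isCompact_closedBall₀ ℝ hr hcball
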